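/- For p = 1/2, the law μ_n of the stabilization time T_n on {0,1}^n with i.i.d. Bernoulli(1/2) bits satisfies μ_n = ((n+1)/2^n)·δ_0 + Σ_{r=0}^{n−2} ((n−r−1)/2^{n−r})·μ̃_{r+2}, where μ̃_m is the law of the stabilization time on strings of length m conditioned to start with 0 and end with 1 (with the middle m−2 bits i.i.d. Bernoulli(1/2)). -/
import Mathlib


open Finset

/-- The k-th bit of a string of length `n`, padded with `false` out of range. -/
def bit (n : ℕ) (ω : Fin n → Bool) (k : ℕ) : Bool :=
  if h : k < n then ω ⟨k, h⟩ else false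

/-- One step of the evolution: every occurrence of "01" is replaced by "10"
(simultaneously).  `E(ω)_i = 1` iff `(ω_i = 1 ∧ ¬(i ≥ 2 ∧ ω_{i-1} = 0)) ∨
(ω_i = 0 ∧ i < n ∧ ω_{i+1} = 1)` (1-indexed; here 0-indexed). -/
def evolve (n : ℕ) (ω : Fin n → Bool) : Fin n → Bool :=
  fun i =>
    (bit n ω i.val && !(decide (0 < i.val) && !bit n ω (i.val - 1)))
      || (!bit n ω i.val && bit n ω (i.val + 1))

/-- A string is stable iff it contains no occurrence of "01". -/
def IsStable (n : ℕ) (ω : Fin n → Bool) : Prop :=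
  ∀ k : ℕ, ¬(bit n ω k = false ∧ bit n ω (k + 1) = true)

/-- The stabilization time: the least number of applications of `evolve`
after which the string is stable. -/
noncomputable def stabTime (n : ℕ) (ω : Fin n → Bool) : ℕ :=
  sInf {m : ℕ | IsStable n ((evolve n)^[m] ω)}

/-- The Bernoulli(p) weight of a string. -/
def weight (p : ℝ) (n : ℕ) (ω : Fin n → Bool) : ℝ :=
  ∏ i, (if ω i then p else 1 - p)

/-- The string `0 x 1` of length `r + 2` obtained by surrounding `x` with a
leading 0 and a trailing 1. -/
def special (r : ℕ) (x : Fin r → Bool) : Fin (r + 2) → Bool :=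
  fun i =>
    if _h0 : i.val = 0 then false
    else if h : i.val ≤ r then x ⟨i.val - 1, by omega⟩
    else true

/-- For `p = 1/2` the law `μ_n` of the stabilization time decomposes as
`μ_n = ((n+1)/2^n) δ_0 + Σ_{r=0}^{n-2} ((n-r-1)/2^{n-r}) μ̃_{r+2}`, where
`μ̃_m` is the law of the stabilization time of strings `0 x_1 … x_{m-2} 1`
with i.i.d. Bernoulli(1/2) middle bits. -/

def padBit (a m : ℕ) (w : Fin m → Bool) (k : ℕ) : Bool :=
  if k < a then true else if k < a + m then bit m w (k - a) else false

def pad (n a m : ℕ) (w : Fin m → Bool) : Fin n → Bool := fun i => padBit a m w i.val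

lemma bit_lt {n : ℕ} (ω : Fin n → Bool) {k : ℕ} (h : k < n) : bit n ω k = ω ⟨k, h⟩ := dif_pos h

lemma bit_ge {n : ℕ} (ω : Fin n → Bool) {k : ℕ} (h : n ≤ k) : bit n ω k = false :=
  dif_neg (by omega)

lemma padBit_lt {a m k : ℕ} (w : Fin m → Bool) (h : k < a) : padBit a m w k = true :=
  if_pos h

lemma padBit_mid {a m k : ℕ} (w : Fin m → Bool) (h1 : a ≤ k) (h2 : k < a + m) :
    padBit a m w k = bit m w (k - a) := by
  unfold padBit; rw [if_neg (by omega), if_pos h2]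

lemma padBit_ge {a m k : ℕ} (w : Fin m → Bool) (h : a + m ≤ k) : padBit a m w k = false := by
  unfold padBit; rw [if_neg (by omega), if_neg (by omega)]

lemma bit_pad {n a m : ℕ} (w : Fin m → Bool) (h : a + m ≤ n) (k : ℕ) :
    bit n (pad n a m w) k = padBit a m w k := by
  unfold bit pad
  split
  · rfl
  · rw [padBit_ge w (by omega)]

lemma evolve_apply (n : ℕ) (ω : Fin n → Bool) (i : Fin n) :
    evolve n ω i = ((bit n ω i.val && !(decide (0 < i.val) && !bit n ω (i.val - 1)))
      || (!bit n ω i.val && bit n ω (i.val + 1))) := rfl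

lemma evolve_pad {n a m : ℕ} (w : Fin m → Bool) (h : a + m ≤ n) :
    evolve n (pad n a m w) = pad n a m (evolve m w) := by
  funext i
  show evolve n (pad n a m w) i = padBit a m (evolve m w) i.val
  rw [evolve_apply, bit_pad w h, bit_pad w h, bit_pad w h]
  rcases Nat.lt_or_ge i.val a with hc | hc
  · -- leading ones
    rw [padBit_lt w hc, padBit_lt (evolve m w) hc]
    rcases Nat.eq_zero_or_pos i.val with h0 | h0
    · simp [h0]
    · rw [padBit_lt w (by omega : i.val - 1 < a)]
      simp [h0]
  rcases Nat.lt_or_ge i.val (a + m) with hc2 | hc2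
  · -- core
    have hm : i.val - a < m := by omega
    rw [padBit_mid w hc hc2, padBit_mid (evolve m w) hc hc2,
      bit_lt (evolve m w) hm, evolve_apply]
    simp only []
    have hnext : padBit a m w (i.val + 1) = bit m w (i.val - a + 1) := by
      rcases Nat.lt_or_ge (i.val + 1) (a + m) with h3 | h3
      · rw [padBit_mid w (by omega) h3]
        congr 1; omega
      · rw [padBit_ge w h3, bit_ge w (by omega)]
    rw [hnext]
    rcases Nat.eq_or_lt_of_le hc with heq | hlt
    · -- i.val = a : no left neighbor inside core
      have h1 : ¬ (0 < i.val - a) := by omega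
      rcases Nat.eq_zero_or_pos i.val with h0 | h0
      · simp [h0, h1]
      · rw [show i.val - 1 = a - 1 by omega, padBit_lt w (by omega)]
        simp [h0, h1]
    · have h0 : 0 < i.val := by omega
      have h1 : 0 < i.val - a := by omega
      rw [padBit_mid w (by omega : a ≤ i.val - 1) (by omega)]
      rw [show i.val - 1 - a = i.val - a - 1 by omega]
      simp [h0, h1]
  · -- trailing zeros
    rw [padBit_ge w hc2, padBit_ge (evolve m w) hc2, padBit_ge w (by omega : a + m ≤ i.val + 1)]
    simp

lemma iterate_pad {n a m : ℕ} (w : Fin m → Bool) (h : a + m ≤ n) (k : ℕ) :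
    (evolve n)^[k] (pad n a m w) = pad n a m ((evolve m)^[k] w) := by
  induction k with
  | zero => rfl
  | succ k ih =>
      rw [Function.iterate_succ_apply', ih, evolve_pad _ h, Function.iterate_succ_apply']

lemma isStable_pad {n a m : ℕ} (w : Fin m → Bool) (h : a + m ≤ n) :
    IsStable n (pad n a m w) ↔ IsStable m w := by
  constructor
  · intro hs k hk
    rcases hk with ⟨hk0, hk1⟩
    have hk1' : k + 1 < m := by
      by_contra hcon
      rw [bit_ge w (by omega)] at hk1
      exact Bool.false_ne_true hk1
    refine hs (a + k) ⟨?_, ?_⟩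
    · rw [bit_pad w h, padBit_mid w (by omega) (by omega)]
      rwa [show a + k - a = k by omega]
    · rw [bit_pad w h, padBit_mid w (by omega) (by omega)]
      rwa [show a + k + 1 - a = k + 1 by omega]
  · intro hs k hk
    rw [bit_pad w h, bit_pad w h] at hk
    rcases hk with ⟨hk0, hk1⟩
    have hka : a ≤ k := by
      by_contra hcon
      rw [padBit_lt w (by omega)] at hk0
      simp at hk0
    have hkm : k < a + m := by
      by_contra hcon
      rw [padBit_ge w (by omega)] at hk1
      exact Bool.false_ne_true hk1
    refine hs (k - a) ⟨?_, ?_⟩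
    · rw [← padBit_mid w hka hkm]; exact hk0
    · rcases Nat.lt_or_ge (k + 1) (a + m) with h3 | h3
      · rw [show k - a + 1 = k + 1 - a by omega, ← padBit_mid w (by omega) h3]
        exact hk1
      · exfalso
        rw [padBit_ge w h3] at hk1
        exact Bool.false_ne_true hk1

lemma stabTime_pad {n a m : ℕ} (w : Fin m → Bool) (h : a + m ≤ n) :
    stabTime n (pad n a m w) = stabTime m w := by
  unfold stabTime
  congr 1
  ext k
  simp only [Set.mem_setOf_eq, iterate_pad w h, isStable_pad _ h]

lemma bit_special_zero (r : ℕ) (x : Fin r → Bool) : bit (r + 2) (special r x) 0 = false := by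
  rw [bit_lt _ (show 0 < r + 2 by omega)]; simp [special]

lemma bit_special_mid (r : ℕ) (x : Fin r → Bool) {k : ℕ} (h1 : 1 ≤ k) (h2 : k ≤ r) :
    bit (r + 2) (special r x) k = x ⟨k - 1, by omega⟩ := by
  rw [bit_lt _ (show k < r + 2 by omega)]
  show (if _h0 : k = 0 then false
    else if h : k ≤ r then x ⟨k - 1, by omega⟩ else true) = _
  rw [dif_neg (by omega), dif_pos (by omega)]

lemma bit_special_last (r : ℕ) (x : Fin r → Bool) :
    bit (r + 2) (special r x) (r + 1) = true := by
  rw [bit_lt _ (show r + 1 < r + 2 by omega)]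
  show (if _h0 : r + 1 = 0 then false
    else if h : r + 1 ≤ r then x ⟨r + 1 - 1, by omega⟩ else true) = true
  rw [dif_neg (by omega), dif_neg (by omega)]

lemma not_isStable_special (r : ℕ) (x : Fin r → Bool) : ¬ IsStable (r + 2) (special r x) := by
  intro hs
  have hex : ∃ k, bit (r + 2) (special r x) k = true := ⟨r + 1, bit_special_last r x⟩
  have hj : bit (r + 2) (special r x) (Nat.find hex) = true := Nat.find_spec hex
  have hj1 : 1 ≤ Nat.find hex := by
    rcases Nat.eq_zero_or_pos (Nat.find hex) with h0 | h0
    · rw [h0, bit_special_zero] at hj; simp at hj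
    · exact h0
  have hprev : bit (r + 2) (special r x) (Nat.find hex - 1) = false := by
    have h := Nat.find_min hex (show Nat.find hex - 1 < Nat.find hex by omega)
    rcases Bool.eq_false_or_eq_true (bit (r + 2) (special r x) (Nat.find hex - 1)) with hb | hb
    · exact absurd hb h
    · exact hb
  exact hs (Nat.find hex - 1) ⟨hprev, by rwa [show Nat.find hex - 1 + 1 = Nat.find hex by omega]⟩

-- stable strings
def ones (n j : ℕ) : Fin n → Bool := fun i => decide (i.val < j)

lemma isStable_ones (n j : ℕ) : IsStable n (ones n j) := by
  rintro k ⟨h0, h1⟩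
  have hk1 : k + 1 < n := by
    by_contra hc; rw [bit_ge _ (by omega)] at h1; simp at h1
  rw [bit_lt _ hk1] at h1
  rw [bit_lt _ (by omega : k < n)] at h0
  simp only [ones, decide_eq_false_iff_not, decide_eq_true_eq] at h0 h1
  omega

lemma stabTime_eq_zero {n : ℕ} {ω : Fin n → Bool} (h : IsStable n ω) : stabTime n ω = 0 :=
  Nat.sInf_eq_zero.mpr (Or.inl (by simpa using h))

lemma stable_eq_ones {n : ℕ} {ω : Fin n → Bool} (h : IsStable n ω) :
    ∃ j ≤ n, ω = ones n j := by
  have hexf : ∃ i, bit n ω i = false := ⟨n, bit_ge ω le_rfl⟩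
  set j := sInf {i | bit n ω i = false} with hj_def
  have hjf : bit n ω j = false := Nat.sInf_mem hexf
  have hjn : j ≤ n := Nat.sInf_le (bit_ge ω le_rfl)
  have hzero : ∀ d, bit n ω (j + d) = false := by
    intro d
    induction d with
    | zero => rw [Nat.add_zero]; exact hjf
    | succ d ih =>
        rw [show j + (d + 1) = j + d + 1 by omega]
        rcases Bool.eq_false_or_eq_true (bit n ω (j + d + 1)) with hb | hb
        · exact absurd ⟨ih, hb⟩ (h (j + d))
        · exact hb
  refine ⟨j, hjn, ?_⟩
  funext i
  show ω i = decide (i.val < j)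
  rcases Nat.lt_or_ge i.val j with hi | hi
  · have hmem := Nat.notMem_of_lt_sInf (show i.val < sInf {i | bit n ω i = false} from hi)
    simp only [Set.mem_setOf_eq] at hmem
    have hb : bit n ω i.val = true := by
      rcases Bool.eq_false_or_eq_true (bit n ω i.val) with hb | hb
      · exact hb
      · exact absurd hb hmem
    have : ω i = true := by rw [← hb, bit_lt ω i.isLt]
    rw [this]; simp [hi]
  · have hb : bit n ω i.val = false := by
      have := hzero (i.val - j)
      rwa [show j + (i.val - j) = i.val by omega] at this
    have : ω i = false := by rw [← hb, bit_lt ω i.isLt]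
    rw [this]; simp; omega

lemma card_stable (n : ℕ) [DecidablePred (IsStable n)] :
    (Finset.univ.filter fun ω : Fin n → Bool => IsStable n ω).card = n + 1 := by
  classical
  have himg : (Finset.univ.filter fun ω : Fin n → Bool => IsStable n ω)
      = Finset.image (fun j => ones n j) (Finset.range (n + 1)) := by
    ext ω
    simp only [Finset.mem_filter, Finset.mem_univ, true_and, Finset.mem_image,
      Finset.mem_range]
    constructor
    · intro h
      obtain ⟨j, hj, he⟩ := stable_eq_ones h
      exact ⟨j, by omega, he.symm⟩
    · rintro ⟨j, hj, rfl⟩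
      exact isStable_ones n j
  rw [himg, Finset.card_image_of_injOn, Finset.card_range]
  intro j hj j' hj' hee
  simp only [Finset.coe_range, Set.mem_Iio] at hj hj'
  by_contra hne
  rcases Nat.lt_or_ge j j' with hlt | hge
  · have := congrFun hee ⟨j, by omega⟩
    simp only [ones, decide_eq_decide] at this
    omega
  · have hlt : j' < j := by omega
    have := congrFun hee ⟨j', by omega⟩
    simp only [ones, decide_eq_decide] at this
    omega

lemma weight_half (n : ℕ) (ω : Fin n → Bool) : weight (1/2) n ω = (1/2 : ℝ) ^ n := by
  unfold weight
  rw [show ∏ i, (if ω i then (1/2 : ℝ) else 1 - 1/2) = ∏ _i : Fin n, (1/2 : ℝ) from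
    Finset.prod_congr rfl (fun i _ => by split <;> norm_num)]
  simp

open Classical in
lemma unstable_sum (n t : ℕ) :
    ∑ ω ∈ Finset.univ.filter (fun ω : Fin n → Bool => ¬ IsStable n ω),
        (1/2 : ℝ) ^ n * (if stabTime n ω = t then 1 else 0)
    = ∑ p ∈ ((Finset.range (n - 1)).sigma fun r =>
        (Finset.range (n - r - 1)).sigma fun _ => (Finset.univ : Finset (Fin r → Bool))),
        (1/2 : ℝ) ^ n * (if stabTime (p.1 + 2) (special p.1 p.2.2) = t then 1 else 0) := by
  symm
  refine Finset.sum_bij (fun p _ => pad n p.2.1 (p.1 + 2) (special p.1 p.2.2)) ?_ ?_ ?_ ?_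
  · rintro ⟨r, a, x⟩ hp
    simp only [Finset.mem_sigma, Finset.mem_range, Finset.mem_univ, and_true] at hp
    obtain ⟨hr, ha⟩ := hp
    have h : a + (r + 2) ≤ n := by omega
    simp only [Finset.mem_filter, Finset.mem_univ, true_and]
    rw [isStable_pad _ h]
    exact not_isStable_special r x
  · rintro ⟨r, a, x⟩ hp ⟨r', a', x'⟩ hp' he
    simp only [Finset.mem_sigma, Finset.mem_range, Finset.mem_univ, and_true] at hp hp'
    obtain ⟨hr, ha⟩ := hp
    obtain ⟨hr', ha'⟩ := hp'
    have h : a + (r + 2) ≤ n := by omega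
    have h' : a' + (r' + 2) ≤ n := by omega
    have hk : ∀ k, k < n →
        padBit a (r + 2) (special r x) k = padBit a' (r' + 2) (special r' x') k := by
      intro k hkn
      exact congrFun he ⟨k, hkn⟩
    have haa : a = a' := by
      by_contra hne
      rcases Nat.lt_or_ge a a' with hlt | hge
      · have hx := hk a (by omega)
        rw [padBit_mid _ (le_refl a) (by omega), Nat.sub_self, bit_special_zero,
          padBit_lt _ hlt] at hx
        simp at hx
      · have hlt : a' < a := by omega
        have hx := hk a' (by omega)
        rw [padBit_lt _ hlt, padBit_mid _ (le_refl a') (by omega), Nat.sub_self,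
          bit_special_zero] at hx
        simp at hx
    subst haa
    have hrr : r = r' := by
      by_contra hne
      rcases Nat.lt_or_ge r r' with hlt | hge
      · have hx := hk (a + r' + 1) (by omega)
        rw [padBit_ge _ (by omega), padBit_mid _ (by omega) (by omega),
          show a + r' + 1 - a = r' + 1 by omega, bit_special_last] at hx
        simp at hx
      · have hlt : r' < r := by omega
        have hx := hk (a + r + 1) (by omega)
        rw [padBit_mid _ (by omega) (by omega), show a + r + 1 - a = r + 1 by omega,
          bit_special_last, padBit_ge _ (by omega)] at hx
        simp at hx
    subst hrr
    have hxx : x = x' := by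
      funext i
      have hi := i.isLt
      have hx := hk (a + 1 + i.val) (by omega)
      rw [padBit_mid _ (by omega) (by omega), padBit_mid _ (by omega) (by omega),
        show a + 1 + i.val - a = i.val + 1 by omega,
        bit_special_mid _ _ (by omega) (by omega),
        bit_special_mid _ _ (by omega) (by omega)] at hx
      simpa using hx
    subst hxx
    rfl
  · rintro ω hω
    rw [Finset.mem_filter] at hω
    obtain ⟨-, hns⟩ := hω
    rw [IsStable] at hns; push_neg at hns
    obtain ⟨k, hk0, hk1⟩ := hns
    have hk1n : k + 1 < n := by
      by_contra hc; rw [bit_ge ω (by omega)] at hk1; simp at hk1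
    have hexf : ∃ i, bit n ω i = false := ⟨k, hk0⟩
    set a := sInf {i | bit n ω i = false} with ha_def
    have haf : bit n ω a = false := Nat.sInf_mem hexf
    have hak : a ≤ k := Nat.sInf_le hk0
    have hlead : ∀ i, i < a → bit n ω i = true := by
      intro i hi
      have hmem := Nat.notMem_of_lt_sInf (show i < sInf {i | bit n ω i = false} from hi)
      simp only [Set.mem_setOf_eq] at hmem
      rcases Bool.eq_false_or_eq_true (bit n ω i) with hb | hb
      · exact hb
      · exact absurd hb hmem
    have hjt : bit n ω (Nat.findGreatest (fun i => bit n ω i = true) n) = true :=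
      Nat.findGreatest_spec (P := fun i => bit n ω i = true) (n := n) (m := k + 1) (by omega) hk1
    set j := Nat.findGreatest (fun i => bit n ω i = true) n with hj_def
    have hjk : k + 1 ≤ j := Nat.le_findGreatest (by omega) hk1
    have hjn : j < n := by
      rcases Nat.lt_or_ge j n with hh | hh
      · exact hh
      · rw [bit_ge ω hh] at hjt; simp at hjt
    have htrail : ∀ i, j < i → bit n ω i = false := by
      intro i hi
      rcases Nat.lt_or_ge i n with hh | hh
      · rcases Bool.eq_false_or_eq_true (bit n ω i) with hb | hb
        · exact absurd hb (Nat.findGreatest_is_greatest hi (by omega))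
        · exact hb
      · exact bit_ge ω hh
    have haj : a < j := by omega
    refine ⟨⟨j - a - 1, a, fun i => bit n ω (a + 1 + i.val)⟩, ?_, ?_⟩
    · rw [Finset.mem_sigma, Finset.mem_sigma]
      refine ⟨?_, ?_, Finset.mem_univ _⟩
      · show j - a - 1 ∈ Finset.range (n - 1)
        rw [Finset.mem_range]; omega
      · show a ∈ Finset.range (n - (j - a - 1) - 1)
        rw [Finset.mem_range]; omega
    · funext i
      show padBit a ((j - a - 1) + 2) (special _ _) i.val = ω i
      have hin : i.val < n := i.isLt
      have hωi : ω i = bit n ω i.val := (bit_lt ω hin).symm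
      rw [hωi]
      rcases Nat.lt_or_ge i.val a with h1 | h1
      · rw [padBit_lt _ h1, hlead _ h1]
      rcases Nat.lt_or_ge i.val (a + ((j - a - 1) + 2)) with h2 | h2
      · rw [padBit_mid _ h1 h2]
        rcases Nat.lt_trichotomy i.val j with h3 | h3 | h3
        · rcases Nat.eq_or_lt_of_le h1 with heq | hlt
          · rw [show i.val - a = 0 by omega, bit_special_zero, ← heq, haf]
          · rw [bit_special_mid _ _ (by omega) (by omega)]
            show bit n ω (a + 1 + (i.val - a - 1)) = bit n ω i.val
            congr 1
            omega
        · rw [show i.val - a = (j - a - 1) + 1 by omega, bit_special_last, h3, hjt]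
        · exact (by omega : False).elim
      · rw [padBit_ge _ h2, htrail i.val (by omega)]
  · rintro ⟨r, a, x⟩ hp
    simp only [Finset.mem_sigma, Finset.mem_range, Finset.mem_univ, and_true] at hp
    obtain ⟨hr, ha⟩ := hp
    have h : a + (r + 2) ≤ n := by omega
    rw [stabTime_pad _ h]

theorem stmt11 (n : ℕ) (t : ℕ) :
    ∑ ω : Fin n → Bool,
        weight (1 / 2) n ω * (if stabTime n ω = t then (1 : ℝ) else 0)
      = ((n : ℝ) + 1) / 2 ^ n * (if t = 0 then (1 : ℝ) else 0)
        + ∑ r ∈ Finset.range (n - 1),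
            (((n : ℝ) - r - 1) / 2 ^ (n - r)) *
              ∑ x : Fin r → Bool,
                weight (1 / 2) r x *
                  (if stabTime (r + 2) (special r x) = t then (1 : ℝ) else 0) := by
  classical
  rw [← Finset.sum_filter_add_sum_filter_not Finset.univ (fun ω : Fin n → Bool => IsStable n ω)
    (fun ω => weight (1 / 2) n ω * (if stabTime n ω = t then (1 : ℝ) else 0))]
  congr 1
  · -- stable part
    have hterm : ∀ ω ∈ Finset.univ.filter (fun ω : Fin n → Bool => IsStable n ω),
        weight (1 / 2) n ω * (if stabTime n ω = t then (1 : ℝ) else 0)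
          = (1/2 : ℝ) ^ n * (if t = 0 then 1 else 0) := by
      intro ω hω
      rw [Finset.mem_filter] at hω
      rw [weight_half, stabTime_eq_zero hω.2]
      congr 1
      simp [eq_comm]
    rw [Finset.sum_congr rfl hterm, Finset.sum_const, card_stable, nsmul_eq_mul]
    push_cast
    rw [div_pow, one_pow]
    ring
  · -- unstable part
    have hterm : ∀ ω ∈ Finset.univ.filter (fun ω : Fin n → Bool => ¬ IsStable n ω),
        weight (1 / 2) n ω * (if stabTime n ω = t then (1 : ℝ) else 0)
          = (1/2 : ℝ) ^ n * (if stabTime n ω = t then 1 else 0) := fun ω _ => by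
      rw [weight_half]
    rw [Finset.sum_congr rfl hterm, unstable_sum n t, Finset.sum_sigma]
    refine Finset.sum_congr rfl ?_
    intro r hr
    rw [Finset.mem_range] at hr
    rw [Finset.sum_sigma]
    show (∑ _a ∈ Finset.range (n - r - 1), ∑ x : Fin r → Bool,
        (1/2 : ℝ) ^ n * (if stabTime (r + 2) (special r x) = t then 1 else 0)) = _
    rw [Finset.sum_const, Finset.card_range, nsmul_eq_mul]
    have hterm2 : ∀ x ∈ (Finset.univ : Finset (Fin r → Bool)),
        weight (1 / 2) r x * (if stabTime (r + 2) (special r x) = t then (1 : ℝ) else 0)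
          = (1/2 : ℝ) ^ r * (if stabTime (r + 2) (special r x) = t then 1 else 0) :=
      fun x _ => by rw [weight_half]
    rw [Finset.sum_congr rfl hterm2]
    have hc : ((n - r - 1 : ℕ) : ℝ) = (n : ℝ) - r - 1 := by
      have he : (n - r - 1 : ℕ) = n - (r + 1) := by omega
      rw [he, Nat.cast_sub (by omega)]
      push_cast
      ring
    have hp : ((1 : ℝ)/2) ^ n = (1/2) ^ (n - r) * (1/2) ^ r := by
      rw [← pow_add]
      congr 1
      omega
    rw [Finset.mul_sum, Finset.mul_sum, hc]
    refine Finset.sum_congr rfl ?_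
    intro x _
    rw [hp, div_pow, one_pow, div_pow, one_pow]
    ring
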